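/- Let m ∈ ℕ and ε > 0, and consider the sequence a_q = q^{-(m + 1/2 + ε)} for q ∈ ℕ, q ≥ C₁. Then for s ∈ [0, m], the weighted sum Σ_{q ≥ C₁} exp(-C t / q^{2(1+α)}) q^{2s} a_q² satisfies Σ_{q ≥ C₁} exp(-C t / q^{2(1+α)}) q^{-(2(m-s)+1+2ε)} ≥ c t^{-((m-s)/(1+α) + (1+2ε)/(2(1+α)))} for all t ≥ 1, with c > 0 independent of t. -/
import Mathlib


/-- Lower bound on the weighted lattice sum: with `a_q = q^{-(m+1/2+ε)}`, `α ∈ {0,1}`,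
`s ∈ [0,m]`, there is `c > 0` independent of `t ≥ 1` such that
`Σ_{q ≥ C₁} exp(-Ct/q^{2(1+α)}) q^{-(2(m-s)+1+2ε)}
  ≥ c t^{-((m-s)/(1+α) + (1+2ε)/(2(1+α)))}`. -/
theorem stmt11 (m : ℕ) (ε : ℝ) (hε : 0 < ε) (α : ℕ) (hα : α = 0 ∨ α = 1)
    (C C₁ : ℝ) (hC : 0 < C) (hC₁ : 0 < C₁) (s : ℝ) (hs : 0 ≤ s) (hsm : s ≤ m) :
    ∃ c : ℝ, 0 < c ∧ ∀ t : ℝ, 1 ≤ t →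
      c * t ^ (-(((m : ℝ) - s) / (1 + α) + (1 + 2 * ε) / (2 * (1 + α)))) ≤
        ∑' q : {q : ℕ // C₁ ≤ (q : ℝ)},
          Real.exp (-(C * t / ((q : ℕ) : ℝ) ^ ((2 : ℝ) * (1 + α)))) *
            ((q : ℕ) : ℝ) ^ (-(2 * ((m : ℝ) - s) + 1 + 2 * ε)) := by
  have hα1 : (0:ℝ) < 1 + (α:ℝ) := by positivity
  set β : ℝ := 2 * (1 + (α:ℝ)) with hβ
  have hβ0 : (0:ℝ) < β := by positivity
  set p : ℝ := 2 * ((m : ℝ) - s) + 1 + 2 * ε with hp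
  have hms : (0:ℝ) ≤ (m:ℝ) - s := by linarith
  have hp1 : 1 < p := by nlinarith
  have hp0 : 0 < p := by linarith
  have hexp : ((m : ℝ) - s) / (1 + (α:ℝ)) + (1 + 2 * ε) / (2 * (1 + (α:ℝ))) = p / β := by
    rw [hβ, hp]; field_simp; ring
  set K : ℝ := C₁ + 2 with hK
  have hKpos : 0 < K := by positivity
  refine ⟨Real.exp (-C) * K ^ (-p), by positivity, ?_⟩
  intro t ht
  have ht0 : (0:ℝ) < t := by linarith
  -- summability
  have hsumN : Summable (fun q : ℕ => (q : ℝ) ^ (-p)) :=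
    Real.summable_nat_rpow.mpr (by linarith)
  have hsumS : Summable (fun q : {q : ℕ // C₁ ≤ (q : ℝ)} => ((q : ℕ) : ℝ) ^ (-p)) :=
    hsumN.subtype _
  have hsum : Summable (fun q : {q : ℕ // C₁ ≤ (q : ℝ)} =>
      Real.exp (-(C * t / ((q : ℕ) : ℝ) ^ β)) * ((q : ℕ) : ℝ) ^ (-p)) := by
    refine Summable.of_nonneg_of_le (fun q => by positivity) (fun q => ?_) hsumS
    have h1 : Real.exp (-(C * t / ((q : ℕ) : ℝ) ^ β)) ≤ 1 := by
      rw [Real.exp_le_one_iff]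
      have : (0:ℝ) ≤ C * t / ((q : ℕ) : ℝ) ^ β := by positivity
      linarith
    calc Real.exp (-(C * t / ((q : ℕ) : ℝ) ^ β)) * ((q : ℕ) : ℝ) ^ (-p)
        ≤ 1 * ((q : ℕ) : ℝ) ^ (-p) := by
          apply mul_le_mul_of_nonneg_right h1 (by positivity)
      _ = ((q : ℕ) : ℝ) ^ (-p) := one_mul _
  -- the chosen index
  set r : ℝ := t ^ (1/β) with hr
  have hr1 : 1 ≤ r := Real.one_le_rpow ht (by positivity)
  have hr0 : 0 < r := by linarith
  have hq0 : C₁ ≤ ((⌈max C₁ r⌉₊ : ℕ) : ℝ) := le_trans (le_max_left _ _) (Nat.le_ceil _)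
  set q₀ : {q : ℕ // C₁ ≤ (q : ℝ)} := ⟨⌈max C₁ r⌉₊, hq0⟩ with hq₀
  have hqpos : (0:ℝ) < ((q₀ : ℕ) : ℝ) := lt_of_lt_of_le hC₁ hq0
  have hq0r : r ≤ ((q₀ : ℕ) : ℝ) := le_trans (le_max_right _ _) (Nat.le_ceil _)
  have hq0K : ((q₀ : ℕ) : ℝ) ≤ K * r := by
    have h1 : ((⌈max C₁ r⌉₊ : ℕ) : ℝ) < max C₁ r + 1 :=
      Nat.ceil_lt_add_one (le_trans hC₁.le (le_max_left _ _))
    have h2 : max C₁ r ≤ C₁ + r := max_le (by linarith) (by linarith)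
    have : ((q₀ : ℕ) : ℝ) < C₁ + r + 1 := by
      calc ((q₀ : ℕ) : ℝ) < max C₁ r + 1 := h1
        _ ≤ C₁ + r + 1 := by linarith
    nlinarith
  have hrβ : r ^ β = t := by
    rw [hr, ← Real.rpow_mul ht0.le, one_div_mul_cancel hβ0.ne', Real.rpow_one]
  have hqβ : t ≤ ((q₀ : ℕ) : ℝ) ^ β := by
    rw [← hrβ]; exact Real.rpow_le_rpow hr0.le hq0r hβ0.le
  -- bound the exponential
  have hexp1 : Real.exp (-C) ≤ Real.exp (-(C * t / ((q₀ : ℕ) : ℝ) ^ β)) := by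
    apply Real.exp_le_exp.mpr
    have hdiv : C * t / ((q₀ : ℕ) : ℝ) ^ β ≤ C := by
      rw [div_le_iff₀ (by positivity)]
      nlinarith
    linarith
  -- bound the power
  have hpow : K ^ (-p) * t ^ (-(p/β)) ≤ ((q₀ : ℕ) : ℝ) ^ (-p) := by
    have h1 : (K * r) ^ (-p) ≤ ((q₀ : ℕ) : ℝ) ^ (-p) :=
      Real.rpow_le_rpow_of_nonpos hqpos hq0K (by linarith)
    have h2 : (K * r) ^ (-p) = K ^ (-p) * t ^ (-(p/β)) := by
      rw [Real.mul_rpow hKpos.le hr0.le, hr, ← Real.rpow_mul ht0.le]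
      congr 1
      field_simp
    linarith [h1, h2.ge]
  have hterm : Real.exp (-C) * K ^ (-p) * t ^ (-(p/β)) ≤
      Real.exp (-(C * t / ((q₀ : ℕ) : ℝ) ^ β)) * ((q₀ : ℕ) : ℝ) ^ (-p) := by
    calc Real.exp (-C) * K ^ (-p) * t ^ (-(p/β))
        = Real.exp (-C) * (K ^ (-p) * t ^ (-(p/β))) := by ring
      _ ≤ Real.exp (-(C * t / ((q₀ : ℕ) : ℝ) ^ β)) * ((q₀ : ℕ) : ℝ) ^ (-p) := by
          apply mul_le_mul hexp1 hpow (by positivity) (Real.exp_pos _).le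
  rw [hexp]
  calc Real.exp (-C) * K ^ (-p) * t ^ (-(p/β))
      ≤ Real.exp (-(C * t / ((q₀ : ℕ) : ℝ) ^ β)) * ((q₀ : ℕ) : ℝ) ^ (-p) := hterm
    _ ≤ _ := Summable.le_tsum hsum q₀ (fun b _ => by positivity)
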